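/- Let N ≥ 1 be a natural number. The minimum of ‖∑_{n=0}^{N−1} exp(i·n·x)‖² over x ∈ [−π/N, π/N] is exactly 1/(sin(π/(2N)))²; that is, 1/(sin(π/(2N)))² is a lower bound for this quantity on [−π/N, π/N] and it is attained at x = π/N. -/

import Mathlib

open Real Complex Finset

lemma norm_exp_I_mul_sub_one (θ : ℝ) :
    ‖Complex.exp (Complex.I * θ) - 1‖ = 2 * |Real.sin (θ / 2)| := by
  have key : Complex.exp (Complex.I * θ) - 1
      = Complex.exp (((θ/2 : ℝ) : ℂ) * Complex.I) *
        (2 * Complex.I * Complex.sin ((θ/2 : ℝ) : ℂ)) := by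
    have h1 : Complex.exp (Complex.I * θ)
        = Complex.exp (((θ/2 : ℝ) : ℂ) * Complex.I) *
          Complex.exp (((θ/2 : ℝ) : ℂ) * Complex.I) := by
      rw [← Complex.exp_add]; congr 1; push_cast; ring
    have h2 : (1 : ℂ) = Complex.exp (((θ/2 : ℝ) : ℂ) * Complex.I) *
        Complex.exp (-(((θ/2 : ℝ) : ℂ) * Complex.I)) := by
      rw [← Complex.exp_add]; simp
    rw [h1]
    nth_rewrite 1 [h2]
    rw [Complex.sin]
    ring_nf
    rw [Complex.I_sq]
    ring
  rw [key, norm_mul, Complex.norm_exp_ofReal_mul_I, one_mul,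
    norm_mul, norm_mul, Complex.norm_two, Complex.norm_I, mul_one, ← Complex.ofReal_sin,
    Complex.norm_real, Real.norm_eq_abs]

lemma kernel_norm (N : ℕ) (x : ℝ) (h : Complex.exp (Complex.I * x) ≠ 1) :
    ‖∑ n : Fin N, Complex.exp (Complex.I * n * x)‖
      = |Real.sin (N * x / 2)| / |Real.sin (x / 2)| := by
  have hsum : ∑ n : Fin N, Complex.exp (Complex.I * n * x)
      = ∑ n ∈ Finset.range N, Complex.exp (Complex.I * x) ^ n := by
    rw [Fin.sum_univ_eq_sum_range (fun n : ℕ => Complex.exp (Complex.I * (n : ℂ) * x))]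
    refine Finset.sum_congr rfl fun n _ => ?_
    rw [← Complex.exp_nat_mul]
    congr 1; push_cast; ring
  rw [hsum, geom_sum_eq h, norm_div]
  rw [← Complex.exp_nat_mul]
  have h1 : (N : ℂ) * (Complex.I * x) = Complex.I * ((N : ℝ) * x : ℝ) := by push_cast; ring
  rw [h1, norm_exp_I_mul_sub_one, norm_exp_I_mul_sub_one]
  rw [mul_div_mul_left _ _ (two_ne_zero)]

lemma sin_key (N : ℕ) (hN : 1 ≤ N) {t : ℝ} (h0 : 0 ≤ t) (h1 : t ≤ π / (2 * N)) :
    Real.sin t ≤ Real.sin (N * t) * Real.sin (π / (2 * N)) := by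
  have hNpos : (0 : ℝ) < N := by exact_mod_cast hN
  have hN1 : (1 : ℝ) ≤ N := by exact_mod_cast hN
  set s : ℝ := Real.sin (π / (2 * N)) with hs_def
  set T : ℝ := π / (2 * N) with hT_def
  have hTpos : 0 < T := by positivity
  have hTle : T ≤ π / 2 := by
    rw [hT_def, div_le_div_iff₀ (by positivity) (by norm_num)]
    nlinarith [Real.pi_pos]
  have hs_pos : 0 < s := Real.sin_pos_of_pos_of_lt_pi hTpos
    (lt_of_le_of_lt hTle (by linarith [Real.pi_pos]))
  have hsN : 1 / (N : ℝ) ≤ s := by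
    have h := Real.mul_le_sin (le_of_lt hTpos) hTle
    have e : 2 / π * T = 1 / N := by
      rw [hT_def]; field_simp
    rw [e] at h; exact h
  set g : ℝ → ℝ := fun t => Real.sin (N * t) * s - Real.sin t with hg_def
  have hconc : ConcaveOn ℝ (Set.Icc 0 T) g := by
    apply concaveOn_of_hasDerivWithinAt2_nonpos (convex_Icc 0 T)
      (f' := fun t => (N : ℝ) * Real.cos (N * t) * s - Real.cos t)
      (f'' := fun t => -((N : ℝ)^2 * Real.sin (N * t) * s) + Real.sin t)
    · fun_prop
    · intro x _
      have h1 : HasDerivAt (fun t : ℝ => Real.sin (N * t) * s - Real.sin t)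
          ((N : ℝ) * Real.cos (N * x) * s - Real.cos x) x := by
        have := ((Real.hasDerivAt_sin ((N:ℝ) * x)).comp x
          ((hasDerivAt_id x).const_mul (N : ℝ))).mul_const s
        simpa [mul_comm, mul_assoc, mul_left_comm, Pi.sub_def] using this.sub (Real.hasDerivAt_sin x)
      exact h1.hasDerivWithinAt
    · intro x _
      have h1 : HasDerivAt (fun t : ℝ => (N : ℝ) * Real.cos (N * t) * s - Real.cos t)
          (-((N : ℝ)^2 * Real.sin (N * x) * s) + Real.sin x) x := by
        have h2 := (((Real.hasDerivAt_cos ((N:ℝ) * x)).comp x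
          ((hasDerivAt_id x).const_mul (N : ℝ))).const_mul (N : ℝ)).mul_const s
        have h3 := Real.hasDerivAt_cos x
        exact (h2.sub h3).congr_deriv (by ring)
      exact h1.hasDerivWithinAt
    · intro x hx
      rw [interior_Icc] at hx
      obtain ⟨hx0, hxT⟩ := hx
      have hNx : (N : ℝ) * x < π / 2 := by
        have e : (N : ℝ) * T = π / 2 := by rw [hT_def]; field_simp
        nlinarith
      have hxle : x ≤ (N : ℝ) * x := by nlinarith
      have hsin_le : Real.sin x ≤ Real.sin ((N : ℝ) * x) :=
        Real.sin_le_sin_of_le_of_le_pi_div_two (by linarith) (le_of_lt hNx) hxle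
      have hsin_pos : 0 < Real.sin ((N : ℝ) * x) :=
        Real.sin_pos_of_pos_of_lt_pi (by positivity) (by linarith [Real.pi_pos])
      have hN2s : 1 ≤ (N : ℝ)^2 * s := by
        have h := mul_le_mul_of_nonneg_left hsN (le_of_lt (by positivity : (0:ℝ) < (N:ℝ)^2))
        have e : (N : ℝ)^2 * (1 / N) = N := by field_simp
        rw [e] at h
        linarith
      nlinarith
  have hg0 : g 0 = 0 := by simp [hg_def]
  have hgT : g T = 0 := by
    have e : (N : ℝ) * T = π / 2 := by rw [hT_def]; field_simp
    simp [hg_def, e, Real.sin_pi_div_two, hs_def]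
  have hmem0 : (0 : ℝ) ∈ Set.Icc 0 T := ⟨le_refl _, le_of_lt hTpos⟩
  have hmemT : T ∈ Set.Icc 0 T := ⟨le_of_lt hTpos, le_refl _⟩
  have hab : (1 - t / T) + t / T = 1 := by ring
  have ha : 0 ≤ 1 - t / T := by
    have : t / T ≤ 1 := by rw [div_le_one hTpos]; exact h1
    linarith
  have hb : 0 ≤ t / T := by positivity
  have hcc := hconc.2 hmem0 hmemT ha hb hab
  rw [hg0, hgT] at hcc
  simp only [smul_eq_mul, mul_zero, add_zero, smul_zero, zero_add] at hcc
  have ht : t / T * T = t := div_mul_cancel₀ t (ne_of_gt hTpos)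
  rw [ht] at hcc
  have h2 : 0 ≤ Real.sin ((N:ℝ) * t) * s - Real.sin t := hcc
  linarith

theorem stmt_8 (N : ℕ) (hN : 1 ≤ N) :
    (∀ x ∈ Set.Icc (-(Real.pi / N)) (Real.pi / N),
      1 / Real.sin (Real.pi / (2 * N)) ^ 2 ≤
        ‖∑ n : Fin N, Complex.exp (Complex.I * n * x)‖ ^ 2) ∧
    ‖∑ n : Fin N, Complex.exp (Complex.I * n * (Real.pi / N : ℝ))‖ ^ 2 =
      1 / Real.sin (Real.pi / (2 * N)) ^ 2 := by
  have hNpos : (0 : ℝ) < N := by exact_mod_cast hN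
  have hN1 : (1 : ℝ) ≤ N := by exact_mod_cast hN
  set s : ℝ := Real.sin (π / (2 * N)) with hs_def
  have hTpos : (0:ℝ) < π / (2 * N) := by positivity
  have hTle : π / (2 * N) ≤ π / 2 := by
    rw [div_le_div_iff₀ (by positivity) (by norm_num)]
    nlinarith [Real.pi_pos]
  have hs_pos : 0 < s := Real.sin_pos_of_pos_of_lt_pi hTpos
    (lt_of_le_of_lt hTle (by linarith [Real.pi_pos]))
  have hsN : 1 / (N : ℝ) ≤ s := by
    have h := Real.mul_le_sin (le_of_lt hTpos) hTle
    have e : 2 / π * (π / (2 * N)) = 1 / N := by field_simp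
    rw [e] at h; exact h
  have hpiN : π / N ≤ π := by
    rw [div_le_iff₀ hNpos]; nlinarith [Real.pi_pos]
  have hne : ∀ x : ℝ, 0 < x → x ≤ π / N → Complex.exp (Complex.I * x) ≠ 1 := by
    intro x hx0 hx1 h
    have hcos : Real.cos x = 1 := by
      have h2 : Complex.exp ((x : ℂ) * Complex.I) = 1 := by rw [mul_comm] at h; exact h
      have h3 := congrArg Complex.re h2
      rwa [Complex.exp_ofReal_mul_I_re, Complex.one_re] at h3
    have hxpi : x ≤ π := le_trans hx1 hpiN
    have := (Real.cos_eq_one_iff_of_lt_of_lt (by nlinarith [Real.pi_pos])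
      (by nlinarith [Real.pi_pos])).1 hcos
    linarith
  -- lower bound for 0 ≤ x ≤ π/N
  have lower : ∀ x : ℝ, 0 ≤ x → x ≤ π / N →
      1 / s ^ 2 ≤ ‖∑ n : Fin N, Complex.exp (Complex.I * n * x)‖ ^ 2 := by
    intro x hx0 hx1
    rcases eq_or_lt_of_le hx0 with h0 | h0
    · -- x = 0
      have hsum : ∑ n : Fin N, Complex.exp (Complex.I * n * (x:ℂ)) = N := by
        rw [← h0]; simp
      rw [hsum]
      have hnn : ‖(N : ℂ)‖ = (N : ℝ) := by
        rw [Complex.norm_natCast]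
      rw [hnn]
      have h1 : 1 / s ≤ (N : ℝ) := by
        rw [div_le_iff₀ hs_pos]
        have h2 := mul_le_mul_of_nonneg_left hsN (le_of_lt hNpos)
        rw [mul_one_div, div_self (ne_of_gt hNpos)] at h2
        linarith
      calc 1 / s ^ 2 = (1 / s) ^ 2 := by rw [div_pow, one_pow]
      _ ≤ (N : ℝ) ^ 2 := pow_le_pow_left₀ (by positivity) h1 2
    · have hnorm := kernel_norm N x (hne x h0 hx1)
      have hx2 : (0:ℝ) < x / 2 := by linarith
      have hx2' : x / 2 ≤ π / (2 * N) := by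
        have e : (π / N) / 2 = π / (2 * N) := by ring
        linarith
      have hkey := sin_key N hN (le_of_lt hx2) hx2'
      have eN : (N : ℝ) * (x / 2) = (N : ℝ) * x / 2 := by ring
      rw [eN] at hkey
      have hNx2 : (N : ℝ) * x / 2 ≤ π / 2 := by
        rw [le_div_iff₀ hNpos] at hx1
        nlinarith
      have hsin2 : 0 < Real.sin (x / 2) :=
        Real.sin_pos_of_pos_of_lt_pi hx2 (by nlinarith [Real.pi_pos, hx2', hTle])
      have hsinN : 0 < Real.sin ((N:ℝ) * x / 2) :=
        Real.sin_pos_of_pos_of_lt_pi (by positivity) (by nlinarith [Real.pi_pos])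
      rw [abs_of_pos hsinN, abs_of_pos hsin2] at hnorm
      rw [hnorm]
      have hratio : 1 / s ≤ Real.sin ((N:ℝ) * x / 2) / Real.sin (x / 2) := by
        rw [div_le_div_iff₀ hs_pos hsin2]
        nlinarith
      calc 1 / s ^ 2 = (1 / s) ^ 2 := by rw [div_pow, one_pow]
      _ ≤ (Real.sin ((N:ℝ) * x / 2) / Real.sin (x / 2)) ^ 2 :=
        pow_le_pow_left₀ (by positivity) hratio 2
  constructor
  · rintro x ⟨hxl, hxr⟩
    rcases le_or_gt 0 x with hx | hx
    · exact lower x hx hxr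
    · have hc : (starRingEnd ℂ) (∑ n : Fin N, Complex.exp (Complex.I * n * (x:ℂ)))
          = ∑ n : Fin N, Complex.exp (Complex.I * n * ((-x : ℝ) : ℂ)) := by
        rw [map_sum]
        refine Finset.sum_congr rfl fun n _ => ?_
        rw [← Complex.exp_conj]
        congr 1
        simp only [map_mul, Complex.conj_I, Complex.conj_ofReal, Complex.conj_natCast,
          Complex.ofReal_neg]
        ring
      have hnorm : ‖∑ n : Fin N, Complex.exp (Complex.I * n * (x:ℂ))‖
          = ‖∑ n : Fin N, Complex.exp (Complex.I * n * ((-x : ℝ) : ℂ))‖ := by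
        rw [← hc, RCLike.norm_conj]
      rw [hnorm]
      exact lower (-x) (by linarith) (by linarith)
  · have hx0 : (0:ℝ) < π / N := by positivity
    have hnorm := kernel_norm N (π / N) (hne (π / N) hx0 (le_refl _))
    have e1 : (N : ℝ) * (π / N) / 2 = π / 2 := by field_simp
    have e2 : (π / N) / 2 = π / (2 * N) := by ring
    rw [e1, e2, Real.sin_pi_div_two, abs_one, abs_of_pos hs_pos] at hnorm
    rw [hnorm]
    rw [div_pow, one_pow]
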